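/- For every real m×n matrix M and every m×m real positive definite matrix Γ, one has tr(Mᵀ Γ⁻¹ M) + tr(Γ) ≥ 2 tr((M Mᵀ)^{1/2}). -/

import Mathlib

open Matrix

/-- Over `ℝ`, `M * Mᵀ` is positive semidefinite. -/
theorem posSemidef_self_mul_transpose {m n : ℕ} (M : Matrix (Fin m) (Fin n) ℝ) :
    (M * Mᵀ).PosSemidef := by
  simpa [Matrix.conjTranspose_eq_transpose_of_trivial] using
    Matrix.posSemidef_self_mul_conjTranspose M

open scoped ComplexOrder in
/-- The positive semidefinite square root of a positive semidefinite matrix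
(the definition `Matrix.PosSemidef.sqrt` of the older Mathlib, since removed). -/
noncomputable def Matrix.PosSemidef.sqrt {n : Type*} [Fintype n] [DecidableEq n] {𝕜 : Type*}
    [RCLike 𝕜] {A : Matrix n n 𝕜} (hA : A.PosSemidef) : Matrix n n 𝕜 :=
  (hA.1.eigenvectorUnitary : Matrix n n 𝕜) * diagonal ((↑) ∘ (√·) ∘ hA.1.eigenvalues) *
    (star (hA.1.eigenvectorUnitary : Matrix n n 𝕜))

theorem sqrtPsd_aux {n : Type*} [Fintype n] [DecidableEq n] {A : Matrix n n ℝ}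
    (hA : A.PosSemidef) : hA.sqrt.PosSemidef := by
  unfold Matrix.PosSemidef.sqrt
  have := (posSemidef_diagonal_iff.mpr (fun i => Real.sqrt_nonneg (hA.1.eigenvalues i))
    : (diagonal ((↑) ∘ (√·) ∘ hA.1.eigenvalues : n → ℝ)).PosSemidef).mul_mul_conjTranspose_same
    (hA.1.eigenvectorUnitary : Matrix n n ℝ)
  exact this

theorem sqrtMul_aux {n : Type*} [Fintype n] [DecidableEq n] {A : Matrix n n ℝ}
    (hA : A.PosSemidef) : hA.sqrt * hA.sqrt = A := by
  unfold Matrix.PosSemidef.sqrt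
  have hspec := hA.1.spectral_theorem
  simp only [Unitary.conjStarAlgAut_apply] at hspec
  have hU : star (hA.1.eigenvectorUnitary : Matrix n n ℝ) * (hA.1.eigenvectorUnitary : Matrix n n ℝ) = 1 :=
    Unitary.star_mul_self_of_mem hA.1.eigenvectorUnitary.2
  have hD : diagonal (RCLike.ofReal ∘ (√·) ∘ hA.1.eigenvalues : n → ℝ) * diagonal (RCLike.ofReal ∘ (√·) ∘ hA.1.eigenvalues : n → ℝ)
      = diagonal (RCLike.ofReal ∘ hA.1.eigenvalues) := by
    rw [diagonal_mul_diagonal]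
    congr 1; funext i
    simp [Real.mul_self_sqrt (hA.eigenvalues_nonneg i)]
  refine Eq.trans ?_ hspec.symm
  rw [Matrix.mul_assoc, Matrix.mul_assoc, ← Matrix.mul_assoc (star _) _ _, ← Matrix.mul_assoc (star _) _ _, hU, Matrix.one_mul, ← Matrix.mul_assoc (diagonal _) (diagonal _), hD, Matrix.mul_assoc]

/-- Lower-bound half of Lemma 1 (variational formulation of the trace norm): for every real
`m × n` matrix `M` and every `m × m` real positive definite matrix `Γ`,
`tr (Mᵀ Γ⁻¹ M) + tr Γ ≥ 2 tr ((M Mᵀ) ^ (1/2))`, where `(M Mᵀ) ^ (1/2)` is the unique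
positive semidefinite square root of `M Mᵀ`, so that `tr ((M Mᵀ) ^ (1/2)) = ‖M‖₊` is
the trace norm of `M`. -/
theorem trace_transpose_inv_mul_add_trace_ge_two_traceNorm
    {m n : ℕ} (M : Matrix (Fin m) (Fin n) ℝ) (Γ : Matrix (Fin m) (Fin m) ℝ)
    (hΓ : Γ.PosDef) :
    (Mᵀ * Γ⁻¹ * M).trace + Γ.trace ≥ 2 * (posSemidef_self_mul_transpose M).sqrt.trace := by
  set T : Matrix (Fin m) (Fin m) ℝ := (posSemidef_self_mul_transpose M).sqrt with hTdef
  have hT : T.PosSemidef := sqrtPsd_aux (posSemidef_self_mul_transpose M)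
  have hTT : T * T = M * Mᵀ := sqrtMul_aux (posSemidef_self_mul_transpose M)
  have hTsym : Tᵀ = T := by
    exact (by simpa [Matrix.conjTranspose_eq_transpose_of_trivial] using hT.1 : T.IsSymm)
  have hΓsym : Γᵀ = Γ := by
    exact (by simpa [Matrix.conjTranspose_eq_transpose_of_trivial] using hΓ.1 : Γ.IsSymm)
  have hΓinv : (Γ⁻¹).PosDef := hΓ.inv
  -- the key positive semidefinite matrix
  have hkey : ((T - Γ)ᵀ * Γ⁻¹ * (T - Γ)).PosSemidef := by
    have := hΓinv.posSemidef.conjTranspose_mul_mul_same (T - Γ)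
    simpa [Matrix.conjTranspose_eq_transpose_of_trivial, Matrix.mul_assoc] using this
  have htr : 0 ≤ ((T - Γ)ᵀ * Γ⁻¹ * (T - Γ)).trace := by
    rw [Matrix.trace]
    apply Finset.sum_nonneg
    intro i _
    exact hkey.diag_nonneg
  have hΓΓinv : Γ * Γ⁻¹ = 1 := Matrix.mul_nonsing_inv Γ hΓ.det_pos.ne'.isUnit
  have hΓinvΓ : Γ⁻¹ * Γ = 1 := Matrix.nonsing_inv_mul Γ hΓ.det_pos.ne'.isUnit
  have hexp : ((T - Γ)ᵀ * Γ⁻¹ * (T - Γ)).trace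
      = (Mᵀ * Γ⁻¹ * M).trace + Γ.trace - 2 * T.trace := by
    have h1 : (T * (Γ⁻¹ * T)).trace = (Mᵀ * Γ⁻¹ * M).trace := by
      rw [Matrix.trace_mul_comm, Matrix.mul_assoc, hTT, ← Matrix.mul_assoc,
        Matrix.trace_mul_comm, ← Matrix.mul_assoc, Matrix.trace_mul_comm (Mᵀ * Γ⁻¹) M,
        ← Matrix.mul_assoc, Matrix.trace_mul_comm]
    have h2 : (Γ * (Γ⁻¹ * T)).trace = T.trace := by
      rw [← Matrix.mul_assoc, hΓΓinv, Matrix.one_mul]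
    have h3 : (T * (Γ⁻¹ * Γ)).trace = T.trace := by
      rw [hΓinvΓ, Matrix.mul_one]
    have h4 : (Γ * (Γ⁻¹ * Γ)).trace = Γ.trace := by
      rw [hΓinvΓ, Matrix.mul_one]
    rw [Matrix.transpose_sub, hTsym, hΓsym]
    simp only [Matrix.sub_mul, Matrix.mul_sub, Matrix.mul_assoc, Matrix.trace_sub]
    rw [h1, h2, h3, h4, Matrix.mul_assoc]
    ring
  rw [hexp] at htr
  linarith
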